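/- Let f : ℝⁿ → ℝⁿ be continuously differentiable and admit a global flow φ. Suppose there exists a continuously differentiable function V : ℝⁿ → ℝ such that f(x) · ∇V(x) ≥ ‖f(x)‖² for all x ∈ ℝⁿ (Euclidean norm). Then the limit set of the system equals the set of stationary points: every limit point y satisfies f(y) = 0, and conversely every point y with f(y) = 0 satisfies y ∈ ω(y, φ). -/

import Mathlib

open Filter Topology

/-- If `V` is a C¹ function with `f(x) · ∇V(x) ≥ ‖f(x)‖²` everywhere, then
the limit set of the global flow `φ` of the C¹ vector field `f` equals the set of
stationary points of `f`. -/
theorem limit_set_eq_stationary_points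
    (n : ℕ)
    (f : EuclideanSpace ℝ (Fin n) → EuclideanSpace ℝ (Fin n))
    (hf : ContDiff ℝ 1 f)
    (φ : EuclideanSpace ℝ (Fin n) → ℝ → EuclideanSpace ℝ (Fin n))
    (hφ : ContDiff ℝ 1 (fun p : EuclideanSpace ℝ (Fin n) × ℝ => φ p.1 p.2))
    (hφ0 : ∀ x, φ x 0 = x)
    (hφ' : ∀ x t, HasDerivAt (φ x) (f (φ x t)) t)
    (V : EuclideanSpace ℝ (Fin n) → ℝ)
    (hV : ContDiff ℝ 1 V)
    (hVf : ∀ x, ‖f x‖ ^ 2 ≤ fderiv ℝ V x (f x)) :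
    (∀ x₀ y : EuclideanSpace ℝ (Fin n),
        (∃ ts : ℕ → ℝ, Tendsto ts atTop atTop ∧
          Tendsto (fun k => φ x₀ (ts k)) atTop (𝓝 y)) → f y = 0) ∧
    (∀ y : EuclideanSpace ℝ (Fin n), f y = 0 →
        ∃ ts : ℕ → ℝ, Tendsto ts atTop atTop ∧
          Tendsto (fun k => φ y (ts k)) atTop (𝓝 y)) := by
  constructor
  · rintro x₀ y ⟨ts, hts, hconv⟩
    by_contra hy
    set x : ℝ → EuclideanSpace ℝ (Fin n) := φ x₀ with hxdef
    have hx' : ∀ t, HasDerivAt x (f (x t)) t := hφ' x₀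
    have hxc : Continuous x := by
      rw [continuous_iff_continuousAt]; exact fun t => (hx' t).continuousAt
    have hVd : Differentiable ℝ V := hV.differentiable one_ne_zero
    set h : ℝ → ℝ := fun t => V (x t) with hhdef
    have hh' : ∀ t, HasDerivAt h (fderiv ℝ V (x t) (f (x t))) t :=
      fun t => (hVd (x t)).hasFDerivAt.comp_hasDerivAt t (hx' t)
    have hhderiv : ∀ t, deriv h t = fderiv ℝ V (x t) (f (x t)) := fun t => (hh' t).deriv
    have hmono : Monotone h := by
      apply monotone_of_deriv_nonneg (fun t => (hh' t).differentiableAt)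
      intro t
      rw [hhderiv]
      exact le_trans (by positivity) (hVf (x t))
    have hlim : Tendsto (fun k => h (ts k)) atTop (𝓝 (V y)) :=
      (hV.continuous.tendsto y).comp hconv
    have hub : ∀ t, h t ≤ V y := fun t =>
      ge_of_tendsto hlim ((hts.eventually_ge_atTop t).mono fun k hk => hmono hk)
    set c := ‖f y‖ with hcdef
    have hc : 0 < c := norm_pos_iff.mpr hy
    obtain ⟨ε, hε, hball⟩ : ∃ ε > 0, ∀ z, dist z y < ε → dist (f z) (f y) < c / 2 := by
      obtain ⟨ε, hε, hb⟩ :=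
        Metric.continuousAt_iff.mp (hf.continuous.continuousAt (x := y)) (c / 2) (by positivity)
      exact ⟨ε, hε, fun z hz => hb hz⟩
    have hflb : ∀ z, dist z y < ε → c / 2 ≤ ‖f z‖ := by
      intro z hz
      have h1 := hball z hz
      rw [dist_eq_norm] at h1
      have h3 : ‖f y‖ - ‖f z‖ ≤ ‖f z - f y‖ := by
        rw [norm_sub_rev]; exact norm_sub_norm_le _ _
      simp only [← hcdef] at h3
      linarith
    have hfub : ∀ z, dist z y < ε → ‖f z‖ ≤ c + c / 2 := by
      intro z hz
      have h1 := hball z hz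
      rw [dist_eq_norm] at h1
      have h3 : ‖f z‖ - ‖f y‖ ≤ ‖f z - f y‖ := norm_sub_norm_le _ _
      simp only [← hcdef] at h3
      linarith
    set δ := ε / (6 * c) with hδdef
    have hδ : 0 < δ := by positivity
    have e1 : ∀ᶠ k in atTop, dist (x (ts k)) y < ε / 4 :=
      (Metric.tendsto_nhds.mp hconv) _ (by positivity)
    have e2 : ∀ᶠ k in atTop, V y - δ * (c ^ 2 / 4) < h (ts k) :=
      hlim.eventually (eventually_gt_nhds (by
        have : 0 < δ * (c ^ 2 / 4) := by positivity
        linarith))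
    obtain ⟨k, hk1, hk2⟩ := (e1.and e2).exists
    set a := ts k with hadef
    set b := a + δ with hbdef
    have hab : a ≤ b := le_add_of_nonneg_right hδ.le
    have key : ∀ t ∈ Set.Icc a b, dist (x t) (x a) < ε / 2 := by
      by_contra hK
      push_neg at hK
      obtain ⟨t₁, ht₁, hge⟩ := hK
      set S := Set.Icc a b ∩ {t | ε / 2 ≤ dist (x t) (x a)} with hSdef
      have hSne : S.Nonempty := ⟨t₁, ht₁, hge⟩
      have hSbdd : BddBelow S := ⟨a, fun s hs => hs.1.1⟩
      have hu : Continuous fun t => dist (x t) (x a) := hxc.dist continuous_const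
      have hSclosed : IsClosed S :=
        isClosed_Icc.inter (isClosed_le continuous_const hu)
      set t₂ := sInf S with ht₂def
      have ht₂S : t₂ ∈ S := hSclosed.csInf_mem hSne hSbdd
      have hat₂ : a < t₂ := by
        rcases lt_or_eq_of_le ht₂S.1.1 with hlt | heq
        · exact hlt
        · exfalso
          have h2 := ht₂S.2
          rw [← heq] at h2
          simp only [Set.mem_setOf_eq, dist_self] at h2
          linarith
      have hlt : ∀ s, a ≤ s → s < t₂ → dist (x s) (x a) < ε / 2 := by
        intro s hs1 hs2
        by_contra hge'
        push_neg at hge'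
        exact absurd (csInf_le hSbdd ⟨⟨hs1, le_trans hs2.le ht₂S.1.2⟩, hge'⟩)
          (not_le.mpr hs2)
      have ht₂le : dist (x t₂) (x a) ≤ ε / 2 := by
        have htend : Tendsto (fun t => dist (x t) (x a)) (𝓝[<] t₂)
            (𝓝 (dist (x t₂) (x a))) := (hu.tendsto t₂).mono_left nhdsWithin_le_nhds
        refine le_of_tendsto htend ?_
        filter_upwards [Ioo_mem_nhdsLT_of_mem (Set.mem_Ioc.mpr ⟨hat₂, le_refl t₂⟩)] with s hs
        exact (hlt s hs.1.le hs.2).le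
      have hle : ∀ s ∈ Set.Icc a t₂, dist (x s) (x a) ≤ ε / 2 := by
        intro s hs
        rcases lt_or_eq_of_le hs.2 with hlt2 | heq
        · exact (hlt s hs.1 hlt2).le
        · rw [heq]; exact ht₂le
      have hbound : ∀ s ∈ Set.Icc a t₂, ‖f (x s)‖ ≤ c + c / 2 := by
        intro s hs
        apply hfub
        calc dist (x s) y ≤ dist (x s) (x a) + dist (x a) y := dist_triangle _ _ _
          _ < ε / 2 + ε / 4 := add_lt_add_of_le_of_lt (hle s hs) hk1
          _ < ε := by linarith
      have hmvt := norm_image_sub_le_of_norm_deriv_le_segment'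
        (f := x) (f' := fun t => f (x t)) (a := a) (b := t₂) (C := c + c / 2)
        (fun s _ => (hx' s).hasDerivWithinAt)
        (fun s hs => hbound s (Set.Ico_subset_Icc_self hs)) t₂
        (Set.mem_Icc.mpr ⟨hat₂.le, le_refl _⟩)
      have hdist : ε / 2 ≤ (c + c / 2) * (t₂ - a) := by
        refine le_trans ht₂S.2 ?_
        rwa [dist_eq_norm]
      have ht₂b : t₂ - a ≤ δ := by
        have := ht₂S.1.2
        rw [hbdef] at this
        linarith
      have hcd : (c + c / 2) * δ = ε / 4 := by
        rw [hδdef]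
        field_simp
        ring
      nlinarith [hc, hε]
    have hhc : Continuous h := hV.continuous.comp hxc
    have hdlb : ∀ s ∈ interior (Set.Icc a b), c ^ 2 / 4 ≤ deriv h s := by
      intro s hs
      rw [interior_Icc] at hs
      have hsd : dist (x s) y < ε := by
        calc dist (x s) y ≤ dist (x s) (x a) + dist (x a) y := dist_triangle _ _ _
          _ < ε / 2 + ε / 4 :=
            add_lt_add_of_le_of_lt (key s (Set.Ioo_subset_Icc_self hs)).le hk1
          _ < ε := by linarith
      rw [hhderiv]
      have h1 := hVf (x s)
      have h2 : c / 2 ≤ ‖f (x s)‖ := hflb _ hsd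
      nlinarith [norm_nonneg (f (x s))]
    have hmvt2 := (convex_Icc a b).mul_sub_le_image_sub_of_le_deriv
      hhc.continuousOn
      (fun s _ => (hh' s).differentiableAt.differentiableWithinAt)
      hdlb a (Set.left_mem_Icc.mpr hab) b (Set.right_mem_Icc.mpr hab) hab
    have hba : b - a = δ := by rw [hbdef]; ring
    rw [hba] at hmvt2
    have := hub b
    nlinarith
  · intro y hy
    refine ⟨fun k => (k : ℝ), tendsto_natCast_atTop_atTop, ?_⟩
    have hxc : Continuous (φ y) := by
      rw [continuous_iff_continuousAt]; exact fun t => (hφ' y t).continuousAt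
    suffices hconst : ∀ t : ℝ, φ y t = y by
      simp only [hconst]
      exact tendsto_const_nhds
    set A := {t : ℝ | φ y t = y} with hAdef
    have hA0 : (0 : ℝ) ∈ A := hφ0 y
    have hclosed : IsClosed A := isClosed_eq hxc continuous_const
    have hopen : IsOpen A := by
      rw [isOpen_iff_mem_nhds]
      intro t₀ ht₀
      obtain ⟨K, s, hs, hK⟩ := (hf.contDiffAt (x := y)).exists_lipschitzOnWith
      have heq : φ y =ᶠ[𝓝 t₀] fun _ => y := by
        apply ODE_solution_unique_of_eventually (v := fun _ z => f z) (s := fun _ => s)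
          (Filter.Eventually.of_forall fun _ => hK)
        · have htend : Tendsto (φ y) (𝓝 t₀) (𝓝 y) := by
            have := hxc.tendsto t₀
            rwa [ht₀] at this
          filter_upwards [htend.eventually_mem hs] with t ht
          exact ⟨hφ' y t, ht⟩
        · filter_upwards with t
          refine ⟨?_, mem_of_mem_nhds hs⟩
          rw [hy]
          exact hasDerivAt_const t y
        · exact ht₀
      exact heq.mono fun t ht => ht
    have hA : A = Set.univ := IsClopen.eq_univ ⟨hclosed, hopen⟩ ⟨0, hA0⟩
    exact fun t => Set.eq_univ_iff_forall.mp hA t
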